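/- Let Q be a finite acyclic quiver without parallel paths, A = kQ, and V_i finite-dimensional vector spaces. Then End_{A \otimes A^{op}}(N(V_*)) \cong \bigoplus_{\alpha: i \to j} End_k(V_i), where N(V_*) = \bigoplus_{\alpha: i \to j} A e_j \otimes V_i \otimes e_i A. -/

import Mathlib

/- STATEMENT 8: Let Q be a finite acyclic quiver without parallel paths, A = kQ, and V_i
finite-dimensional vector spaces. Then
  End_{A ⊗ A^op}(N(V_*)) ≅ ⊕_{α : i → j} End_k(V_i)   as k-algebras,
where N(V_*) = ⊕_{α : i → j} A e_j ⊗ V_i ⊗ e_i A.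

The bimodule N(V_*) is modeled by its components
N(V_*)_{a,b} = ⊕_{(α : i→j, ω : j⇝a, ω' : b⇝i)} V_i with structure maps the inclusions of
direct summands; bimodule endomorphisms are families of linear maps on components commuting
with all structure maps, with multiplication given by componentwise composition. -/

open Quiver DirectSum

set_option synthInstance.maxHeartbeats 400000
set_option maxHeartbeats 1000000

/-- The set of arrows of `Q`. -/
abbrev Arr (Q : Type) [Quiver.{0} Q] : Type := Σ i j : Q, i ⟶ j

/-- Index of the direct summands of `N(V_*)_{a,b}`. -/
abbrev NIdx (Q : Type) [Quiver.{0} Q] (a b : Q) : Type :=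
  Σ ar : Arr Q, Path ar.2.1 a × Path b ar.1

/-- The component `N(V_*)_{a,b}`. -/
abbrev Nc (F : Type) [Field F] (Q : Type) [Quiver.{0} Q]
    (V : Q → Type) [∀ p, AddCommGroup (V p)] [∀ p, Module F (V p)] (a b : Q) : Type :=
  ⨁ (t : NIdx Q a b), V t.1.1

open scoped Classical in
/-- Left structure map of `N(V_*)` along `γ : a ⟶ a'`. -/
noncomputable def NlAct (F : Type) [Field F] (Q : Type) [Quiver.{0} Q]
    (V : Q → Type) [∀ p, AddCommGroup (V p)] [∀ p, Module F (V p)]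
    {a a' : Q} (γ : a ⟶ a') (b : Q) : Nc F Q V a b →ₗ[F] Nc F Q V a' b :=
  DirectSum.toModule F (NIdx Q a b) _ fun t =>
    DirectSum.lof F (NIdx Q a' b) (fun s => V s.1.1) ⟨t.1, t.2.1.cons γ, t.2.2⟩

open scoped Classical in
/-- Right structure map of `N(V_*)` along `δ : b' ⟶ b`. -/
noncomputable def NrAct (F : Type) [Field F] (Q : Type) [Quiver.{0} Q]
    (V : Q → Type) [∀ p, AddCommGroup (V p)] [∀ p, Module F (V p)]
    (a : Q) {b b' : Q} (δ : b' ⟶ b) : Nc F Q V a b →ₗ[F] Nc F Q V a b' :=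
  DirectSum.toModule F (NIdx Q a b) _ fun t =>
    DirectSum.lof F (NIdx Q a b') (fun s => V s.1.1) ⟨t.1, t.2.1, (δ.toPath).comp t.2.2⟩

/-- The space of bimodule endomorphisms of `N(V_*)`. -/
noncomputable def bimodEndN (F : Type) [Field F] (Q : Type) [Quiver.{0} Q]
    (V : Q → Type) [∀ p, AddCommGroup (V p)] [∀ p, Module F (V p)] :
    Submodule F (∀ a b : Q, Nc F Q V a b →ₗ[F] Nc F Q V a b) where
  carrier := {f |
    (∀ (a a' b : Q) (γ : a ⟶ a'),
      (NlAct F Q V γ b).comp (f a b) = (f a' b).comp (NlAct F Q V γ b)) ∧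
    (∀ (a b b' : Q) (δ : b' ⟶ b),
      (NrAct F Q V a δ).comp (f a b) = (f a b').comp (NrAct F Q V a δ))}
  add_mem' := by
    rintro f g ⟨hf1, hf2⟩ ⟨hg1, hg2⟩
    refine ⟨fun a a' b γ => ?_, fun a b b' δ => ?_⟩
    · simp [LinearMap.comp_add, LinearMap.add_comp, hf1 a a' b γ, hg1 a a' b γ]
    · simp [LinearMap.comp_add, LinearMap.add_comp, hf2 a b b' δ, hg2 a b b' δ]
  zero_mem' := by
    refine ⟨fun a a' b γ => ?_, fun a b b' δ => ?_⟩ <;> simp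
  smul_mem' := by
    rintro c f ⟨h1, h2⟩
    refine ⟨fun a a' b γ => ?_, fun a b b' δ => ?_⟩
    · simp [LinearMap.comp_smul, LinearMap.smul_comp, h1 a a' b γ]
    · simp [LinearMap.comp_smul, LinearMap.smul_comp, h2 a b b' δ]

section Aux

open scoped Classical

variable (F : Type) [Field F] (Q : Type) [Quiver.{0} Q]
    (V : Q → Type) [∀ p, AddCommGroup (V p)] [∀ p, Module F (V p)]

lemma comp_toPath {Q : Type} [Quiver.{0} Q] {a b c : Q} (p : Path a b) (e : b ⟶ c) :
    p.comp e.toPath = p.cons e := by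
  change p.comp (Path.nil.cons e) = _
  rw [Quiver.Path.comp_cons, Quiver.Path.comp_nil]

lemma NlAct_lof {a a' : Q} (γ : a ⟶ a') (b : Q) (t : NIdx Q a b) (v : V t.1.1) :
    NlAct F Q V γ b (DirectSum.lof F _ (fun s : NIdx Q _ _ => V s.1.1) t v)
      = DirectSum.lof F _ (fun s : NIdx Q _ _ => V s.1.1) ⟨t.1, t.2.1.cons γ, t.2.2⟩ v := by
  simp [NlAct, DirectSum.toModule_lof]

lemma NrAct_lof (a : Q) {b b' : Q} (δ : b' ⟶ b) (t : NIdx Q a b) (v : V t.1.1) :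
    NrAct F Q V a δ (DirectSum.lof F _ (fun s : NIdx Q _ _ => V s.1.1) t v)
      = DirectSum.lof F _ (fun s : NIdx Q _ _ => V s.1.1) ⟨t.1, t.2.1, (δ.toPath).comp t.2.2⟩ v := by
  simp [NrAct, DirectSum.toModule_lof]

/-- Iterated left structure map along a path. -/
noncomputable def Lp : ∀ {a a' : Q}, Path a a' → ∀ b : Q, Nc F Q V a b →ₗ[F] Nc F Q V a' b
  | _, _, Path.nil, _ => LinearMap.id
  | _, _, Path.cons p γ, b => (NlAct F Q V γ b).comp (Lp p b)

/-- Iterated right structure map along a path. -/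
noncomputable def Rp (a : Q) : ∀ {b' b : Q}, Path b' b → Nc F Q V a b →ₗ[F] Nc F Q V a b'
  | _, _, Path.nil => LinearMap.id
  | _, _, Path.cons q δ => (Rp a q).comp (NrAct F Q V a δ)

lemma Lp_lof {a a' : Q} (p : Path a a') (b : Q) (t : NIdx Q a b) (v : V t.1.1) :
    Lp F Q V p b (DirectSum.lof F _ (fun s : NIdx Q _ _ => V s.1.1) t v)
      = DirectSum.lof F _ (fun s : NIdx Q _ _ => V s.1.1) ⟨t.1, t.2.1.comp p, t.2.2⟩ v := by
  induction p with
  | nil => simp [Lp]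
  | cons p γ ih =>
      simp only [Lp, LinearMap.comp_apply, ih, NlAct_lof, Quiver.Path.comp_cons]

lemma Rp_lof (a : Q) {b' b : Q} (q : Path b' b) (t : NIdx Q a b) (v : V t.1.1) :
    Rp F Q V a q (DirectSum.lof F _ (fun s : NIdx Q _ _ => V s.1.1) t v)
      = DirectSum.lof F _ (fun s : NIdx Q _ _ => V s.1.1) ⟨t.1, t.2.1, q.comp t.2.2⟩ v := by
  induction q with
  | nil => rw [Quiver.Path.nil_comp]; simp [Rp]
  | cons q δ ih =>
      simp only [Rp, LinearMap.comp_apply, NrAct_lof, ih]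
      rw [← Quiver.Path.comp_assoc, comp_toPath]

lemma lof_index_congr {a b : Q} (ar : Arr Q) (p p' : Path ar.2.1 a) (q q' : Path b ar.1)
    (hp : p = p') (hq : q = q') (x : V ar.1) :
    DirectSum.lof F (NIdx Q a b) (fun s => V s.1.1) ⟨ar, p, q⟩ x
      = DirectSum.lof F (NIdx Q a b) (fun s => V s.1.1) ⟨ar, p', q'⟩ x := by
  subst hp; subst hq; rfl

lemma f_comm_Lp (f : ∀ a b : Q, Nc F Q V a b →ₗ[F] Nc F Q V a b)
    (hf : f ∈ bimodEndN F Q V) {a a' : Q} (p : Path a a') (b : Q) :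
    (Lp F Q V p b).comp (f a b) = (f a' b).comp (Lp F Q V p b) := by
  induction p with
  | nil => simp [Lp]
  | cons p γ ih =>
      simp only [Lp, LinearMap.comp_assoc, ih]
      rw [← LinearMap.comp_assoc, hf.1 _ _ _ γ, LinearMap.comp_assoc]

lemma f_comm_Rp (f : ∀ a b : Q, Nc F Q V a b →ₗ[F] Nc F Q V a b)
    (hf : f ∈ bimodEndN F Q V) (a : Q) {b' b : Q} (q : Path b' b) :
    (Rp F Q V a q).comp (f a b) = (f a b').comp (Rp F Q V a q) := by
  induction q with
  | nil => simp [Rp]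
  | cons q δ ih =>
      simp only [Rp, LinearMap.comp_assoc, hf.2 _ _ _ δ]
      rw [← LinearMap.comp_assoc, ih, LinearMap.comp_assoc]

/-- Under "no parallel paths", the index set `NIdx Q j i` for an arrow `α : i ⟶ j`
is a singleton. -/
lemma NIdx_unique (hnopar : ∀ (a b : Q) (p q : Path a b), p = q)
    (ar : Arr Q) (s : NIdx Q ar.2.1 ar.1) :
    s = ⟨ar, Path.nil, Path.nil⟩ := by
  obtain ⟨i, j, α⟩ := ar
  obtain ⟨⟨i', j', α'⟩, ω₁, ω₂⟩ := s
  have hc : (ω₂.comp α'.toPath).comp ω₁ = α.toPath := hnopar i j _ _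
  have hlen := congrArg Path.length hc
  simp only [Quiver.Path.length_comp, Hom.toPath, Quiver.Path.length_cons,
    Quiver.Path.length_nil] at hlen
  have h1 : ω₁.length = 0 := by omega
  have h2 : ω₂.length = 0 := by omega
  obtain rfl : i = i' := ω₂.eq_of_length_zero h2
  obtain rfl : j' = j := ω₁.eq_of_length_zero h1
  obtain rfl : ω₁ = Path.nil := ω₁.eq_nil_of_length_zero h1
  obtain rfl : ω₂ = Path.nil := ω₂.eq_nil_of_length_zero h2
  simp only [Quiver.Path.nil_comp, Quiver.Path.comp_nil, Hom.toPath,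
    Quiver.Path.cons.injEq, heq_eq_eq, true_and] at hc
  obtain rfl := hc
  rfl

lemma elem_eq (hnopar : ∀ (a b : Q) (p q : Path a b), p = q) (ar : Arr Q)
    (x : Nc F Q V ar.2.1 ar.1) :
    x = DirectSum.lof F _ (fun s : NIdx Q ar.2.1 ar.1 => V s.1.1)
      ⟨ar, Path.nil, Path.nil⟩ (x ⟨ar, Path.nil, Path.nil⟩) := by
  refine DirectSum.ext_component F fun s => ?_
  obtain rfl := NIdx_unique Q hnopar ar s
  simp only [DirectSum.component.lof_self]
  rfl

end Aux

/-- `End_{A ⊗ A^op}(N(V_*)) ≅ ⊕_{α : i → j} End_k(V_i)` as `k`-algebras: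
there is a `k`-linear equivalence which is moreover multiplicative and unital. -/
theorem bimodEndN_iso (F : Type) [Field F] (Q : Type) [Quiver.{0} Q]
    [Fintype Q] [∀ a b : Q, Fintype (a ⟶ b)]
    (hacyclic : ∀ (a : Q) (p : Path a a), p = Path.nil)
    (hnopar : ∀ (a b : Q) (p q : Path a b), p = q)
    (V : Q → Type) [∀ p, AddCommGroup (V p)] [∀ p, Module F (V p)]
    [∀ p, FiniteDimensional F (V p)] :
    ∃ e : ↥(bimodEndN F Q V) ≃ₗ[F] (∀ ar : Arr Q, V ar.1 →ₗ[F] V ar.1),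
      (∀ f g : ↥(bimodEndN F Q V), ∃ h : ↥(bimodEndN F Q V),
        (∀ a b : Q, h.val a b = (f.val a b).comp (g.val a b)) ∧
        (∀ ar : Arr Q, e h ar = (e f ar).comp (e g ar))) ∧
      (∃ one : ↥(bimodEndN F Q V),
        (∀ a b : Q, one.val a b = LinearMap.id) ∧
        (∀ ar : Arr Q, e one ar = LinearMap.id)) := by
  classical
  let t0 : ∀ ar : Arr Q, NIdx Q ar.2.1 ar.1 := fun ar => ⟨ar, Path.nil, Path.nil⟩
  let Ev : (∀ a b : Q, Nc F Q V a b →ₗ[F] Nc F Q V a b) → ∀ ar : Arr Q, V ar.1 →ₗ[F] V ar.1 :=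
    fun f ar => (DirectSum.component F (NIdx Q ar.2.1 ar.1) (fun s => V s.1.1) (t0 ar)).comp
      ((f ar.2.1 ar.1).comp (DirectSum.lof F (NIdx Q ar.2.1 ar.1) (fun s => V s.1.1) (t0 ar)))
  have hconc : ∀ (ar : Arr Q) (x : Nc F Q V ar.2.1 ar.1),
      x = DirectSum.lof F _ (fun s : NIdx Q ar.2.1 ar.1 => V s.1.1) (t0 ar) (x (t0 ar)) :=
    fun ar x => elem_eq F Q V hnopar ar x
  let D : (∀ ar : Arr Q, V ar.1 →ₗ[F] V ar.1) → ∀ a b : Q, Nc F Q V a b →ₗ[F] Nc F Q V a b :=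
    fun g a b => DirectSum.toModule F (NIdx Q a b) _ fun t =>
      (DirectSum.lof F (NIdx Q a b) (fun s => V s.1.1) t).comp (g t.1)
  have hD_lof : ∀ (g : ∀ ar : Arr Q, V ar.1 →ₗ[F] V ar.1) (a b : Q) (t : NIdx Q a b)
      (v : V t.1.1),
      D g a b (DirectSum.lof F _ (fun s : NIdx Q a b => V s.1.1) t v)
        = DirectSum.lof F _ (fun s : NIdx Q a b => V s.1.1) t (g t.1 v) := by
    intro g a b t v; simp [D, DirectSum.toModule_lof]
  have hDmem : ∀ g, D g ∈ bimodEndN F Q V := by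
    intro g
    constructor
    · intro a a' b γ
      refine DirectSum.linearMap_ext F fun t => ?_
      ext v
      simp [LinearMap.comp_apply, hD_lof, NlAct_lof]
    · intro a b b' δ
      refine DirectSum.linearMap_ext F fun t => ?_
      ext v
      simp [LinearMap.comp_apply, hD_lof, NrAct_lof]
  have hmain : ∀ (f : ∀ a b : Q, Nc F Q V a b →ₗ[F] Nc F Q V a b), f ∈ bimodEndN F Q V →
      ∀ (a b : Q) (t : NIdx Q a b) (v : V t.1.1),
      f a b (DirectSum.lof F _ (fun s : NIdx Q a b => V s.1.1) t v)
        = DirectSum.lof F _ (fun s : NIdx Q a b => V s.1.1) t (Ev f t.1 v) := by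
    intro f hf a b t v
    obtain ⟨ar, ω, ω'⟩ := t
    have h1 : DirectSum.lof F _ (fun s : NIdx Q a b => V s.1.1) ⟨ar, ω, ω'⟩ v
        = Lp F Q V ω b (Rp F Q V ar.2.1 ω'
            (DirectSum.lof F _ (fun s : NIdx Q ar.2.1 ar.1 => V s.1.1) (t0 ar) v)) := by
      rw [Rp_lof, Lp_lof]
      exact lof_index_congr F Q V ar _ _ _ _ (Quiver.Path.nil_comp ω).symm rfl v
    have h2 : f ar.2.1 ar.1
          (DirectSum.lof F _ (fun s : NIdx Q ar.2.1 ar.1 => V s.1.1) (t0 ar) v)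
        = DirectSum.lof F _ (fun s : NIdx Q ar.2.1 ar.1 => V s.1.1) (t0 ar) (Ev f ar v) := by
      rw [hconc ar (f ar.2.1 ar.1 _)]; rfl
    have e1 := LinearMap.congr_fun (f_comm_Lp F Q V f hf ω b)
      (Rp F Q V ar.2.1 ω' (DirectSum.lof F _ (fun s : NIdx Q ar.2.1 ar.1 => V s.1.1) (t0 ar) v))
    have e2 := LinearMap.congr_fun (f_comm_Rp F Q V f hf ar.2.1 ω')
      (DirectSum.lof F _ (fun s : NIdx Q ar.2.1 ar.1 => V s.1.1) (t0 ar) v)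
    simp only [LinearMap.comp_apply] at e1 e2
    rw [h1, ← e1, ← e2, h2, Rp_lof, Lp_lof]
    exact lof_index_congr F Q V ar _ _ _ _ (Quiver.Path.nil_comp ω) rfl _
  let Elin : ↥(bimodEndN F Q V) →ₗ[F] (∀ ar : Arr Q, V ar.1 →ₗ[F] V ar.1) :=
    { toFun := fun f => Ev f.1
      map_add' := by
        intro f g; funext ar; ext v
        simp [Ev]
      map_smul' := by
        intro c f; funext ar; ext v
        simp [Ev] }
  have hleft : ∀ f : ↥(bimodEndN F Q V), (⟨D (Ev f.1), hDmem _⟩ : ↥(bimodEndN F Q V)) = f := by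
    intro f
    refine Subtype.ext (funext fun a => funext fun b => ?_)
    refine DirectSum.linearMap_ext F fun t => ?_
    ext v
    simp only [LinearMap.comp_apply]
    rw [hD_lof, hmain f.1 f.2 a b t v]
  have hright : ∀ g : ∀ ar : Arr Q, V ar.1 →ₗ[F] V ar.1, Ev (D g) = g := by
    intro g; funext ar; ext v
    simp only [Ev, LinearMap.comp_apply]
    rw [hD_lof]
    simp
    rfl
  refine ⟨⟨Elin, fun g => ⟨D g, hDmem g⟩, fun f => hleft f, fun g => hright g⟩, ?_, ?_⟩
  · intro f g
    have hf := f.2; have hg := g.2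
    have hmem : (fun a b => (f.1 a b).comp (g.1 a b)) ∈ bimodEndN F Q V := by
      constructor
      · intro a a' b γ
        refine LinearMap.ext fun x => ?_
        have h1 := LinearMap.congr_fun (hg.1 a a' b γ) x
        have h2 := LinearMap.congr_fun (hf.1 a a' b γ) (g.1 a b x)
        simp only [LinearMap.comp_apply] at h1 h2 ⊢
        rw [h2, h1]
      · intro a b b' δ
        refine LinearMap.ext fun x => ?_
        have h1 := LinearMap.congr_fun (hg.2 a b b' δ) x
        have h2 := LinearMap.congr_fun (hf.2 a b b' δ) (g.1 a b x)
        simp only [LinearMap.comp_apply] at h1 h2 ⊢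
        rw [h2, h1]
    refine ⟨⟨_, hmem⟩, fun a b => rfl, fun ar => ?_⟩
    ext v
    show Ev (fun a b => (f.1 a b).comp (g.1 a b)) ar v = Ev f.1 ar (Ev g.1 ar v)
    simp only [Ev, LinearMap.comp_apply]
    rw [hmain g.1 g.2 _ _ (t0 ar) v]
    rw [hmain f.1 f.2 _ _ (t0 ar) (Ev g.1 ar v)]
    simp [Ev]
    rfl
  · have hmem1 : (fun a b : Q => (LinearMap.id : Nc F Q V a b →ₗ[F] Nc F Q V a b))
        ∈ bimodEndN F Q V := by
      exact ⟨fun a a' b γ => by simp, fun a b b' δ => by simp⟩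
    refine ⟨⟨_, hmem1⟩, fun a b => rfl, fun ar => ?_⟩
    ext v
    show Ev (fun a b : Q => (LinearMap.id : Nc F Q V a b →ₗ[F] Nc F Q V a b)) ar v = v
    simp [Ev]
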